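/- Integral mark-invariance identity (pathwise form of Lemma 3.8): let S be the thinning solution of (P, μ, Φ) with intensity Λ^S, let v ∈ (0, T] not be a time coordinate of P, and let G be any real-valued function on finite subsets of (0, T]. For θ ≥ 0 denote by S_θ the thinning solution of (P ∪ {(v, θ)}, μ, Φ) and by τ(S_θ) its set of selected time coordinates. Then ∫₀^∞ 1_{θ ≤ Λ^S(v)} G(τ(S_θ)) dθ = Λ^S(v) · G(τ(S_0)). -/

import Mathlib

open Finset MeasureTheory

/-- A configuration for horizon `T`: a finite set of marked points in `(0,T] × [0,∞)`
whose time coordinates are pairwise distinct. -/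
def IsConfig (T : ℝ) (P : Finset (ℝ × ℝ)) : Prop :=
  (∀ p ∈ P, 0 < p.1 ∧ p.1 ≤ T ∧ 0 ≤ p.2) ∧
    ∀ p ∈ P, ∀ q ∈ P, p.1 = q.1 → p = q

/-- The intensity `Λ^S(t) = μ(t) + ∑_{(s,σ) ∈ S, s < t} Φ(t − s)`. -/
noncomputable def intensity (μ Φ : ℝ → ℝ) (S : Finset (ℝ × ℝ)) (t : ℝ) : ℝ :=
  μ t + ∑ q ∈ S.filter (fun q => q.1 < t), Φ (t - q.1)

/-- `S` is a thinning solution for `(P, μ, Φ)`: `S ⊆ P` and a point `(t,θ)` of `P`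
belongs to `S` iff `θ ≤ Λ^S(t)`. -/
noncomputable def IsThinningSolution (μ Φ : ℝ → ℝ) (P S : Finset (ℝ × ℝ)) : Prop :=
  S ⊆ P ∧ ∀ p ∈ P, (p ∈ S ↔ p.2 ≤ intensity μ Φ S p.1)

/-- The counting function `H^S(t) = #{(s,σ) ∈ S : s ≤ t}`. -/
noncomputable def countFun (S : Finset (ℝ × ℝ)) (t : ℝ) : ℕ :=
  (S.filter (fun q => q.1 ≤ t)).card

/-- Integral mark-invariance identity (pathwise form of Lemma 3.8): for a fresh
time `v` and any functional `G` of the set of selected times,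
`∫₀^∞ 1_{θ ≤ Λ^S(v)} G(τ(S_θ)) dθ = Λ^S(v) · G(τ(S_0))`, where `S_θ` is the
thinning solution of `(P ∪ {(v,θ)}, μ, Φ)` and `τ(S_θ)` its set of selected
time coordinates. -/

private lemma sum_proj (Φ : ℝ → ℝ) (t : ℝ) (F : Finset (ℝ × ℝ))
    (hinj : ∀ p ∈ F, ∀ q ∈ F, p.1 = q.1 → p = q) :
    ∑ q ∈ F, Φ (t - q.1) = ∑ s ∈ F.image Prod.fst, Φ (t - s) :=
  by rw [Finset.sum_image hinj]

private lemma intensity_congr (μ Φ : ℝ → ℝ) (t : ℝ) (S1 S2 : Finset (ℝ × ℝ))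
    (h1 : ∀ p ∈ S1, ∀ q ∈ S1, p.1 = q.1 → p = q)
    (h2 : ∀ p ∈ S2, ∀ q ∈ S2, p.1 = q.1 → p = q)
    (h : (S1.filter (fun q => q.1 < t)).image Prod.fst
        = (S2.filter (fun q => q.1 < t)).image Prod.fst) :
    intensity μ Φ S1 t = intensity μ Φ S2 t := by
  unfold intensity
  congr 1
  rw [sum_proj Φ t _ (fun p hp q hq => h1 p (Finset.mem_of_mem_filter _ hp) q
        (Finset.mem_of_mem_filter _ hq)),
      sum_proj Φ t _ (fun p hp q hq => h2 p (Finset.mem_of_mem_filter _ hp) q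
        (Finset.mem_of_mem_filter _ hq)), h]

private lemma below_eq (μ Φ : ℝ → ℝ)
    (P : Finset (ℝ × ℝ))
    (S : Finset (ℝ × ℝ)) (hS : IsThinningSolution μ Φ P S)
    (v θ' : ℝ)
    (S' : Finset (ℝ × ℝ)) (hS' : IsThinningSolution μ Φ (insert (v, θ') P) S') :
    ∀ n : ℕ, ∀ t, t ≤ v → (P.filter (fun q => q.1 < t)).card ≤ n →
      S'.filter (fun q => q.1 < t) = S.filter (fun q => q.1 < t) := by
  intro n
  induction n using Nat.strong_induction_on with
  | _ n ih =>
    intro t htv hcard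
    have key : ∀ q ∈ P, q.1 < t → (q ∈ S' ↔ q ∈ S) := by
      intro q hqP hqt
      have hsub : P.filter (fun r => r.1 < q.1) ⊂ P.filter (fun r => r.1 < t) := by
        refine (Finset.ssubset_iff_of_subset ?_).mpr
          ⟨q, Finset.mem_filter.mpr ⟨hqP, hqt⟩, by simp⟩
        intro r hr
        rcases Finset.mem_filter.mp hr with ⟨hrP, hrlt⟩
        exact Finset.mem_filter.mpr ⟨hrP, lt_trans hrlt hqt⟩
      have hfe := ih _ (lt_of_lt_of_le (Finset.card_lt_card hsub) hcard) q.1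
        ((hqt.trans_le htv).le) le_rfl
      have heq : intensity μ Φ S' q.1 = intensity μ Φ S q.1 := by
        unfold intensity
        rw [hfe]
      rw [hS'.2 q (Finset.mem_insert_of_mem hqP), hS.2 q hqP, heq]
    ext q
    simp only [Finset.mem_filter]
    constructor
    · rintro ⟨hqS', hqt⟩
      have hqP : q ∈ P := by
        rcases Finset.mem_insert.mp (hS'.1 hqS') with h | h
        · exfalso
          rw [h] at hqt
          exact absurd hqt (not_lt.mpr htv)
        · exact h
      exact ⟨(key q hqP hqt).mp hqS', hqt⟩
    · rintro ⟨hqS, hqt⟩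
      exact ⟨(key q (hS.1 hqS) hqt).mpr hqS, hqt⟩

private lemma image_filter_eq (μ Φ : ℝ → ℝ)
    (P : Finset (ℝ × ℝ)) (v θ : ℝ)
    (hc1 : ∀ p ∈ insert (v, θ) P, ∀ q ∈ insert (v, θ) P, p.1 = q.1 → p = q)
    (hc2 : ∀ p ∈ insert (v, (0:ℝ)) P, ∀ q ∈ insert (v, (0:ℝ)) P, p.1 = q.1 → p = q)
    (S1 : Finset (ℝ × ℝ)) (hS1 : IsThinningSolution μ Φ (insert (v, θ) P) S1)
    (S2 : Finset (ℝ × ℝ)) (hS2 : IsThinningSolution μ Φ (insert (v, 0) P) S2)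
    (hv1 : (v, θ) ∈ S1) (hv2 : (v, (0:ℝ)) ∈ S2) :
    ∀ n : ℕ, ∀ t, (P.filter (fun q => q.1 < t)).card ≤ n →
      (S1.filter (fun q => q.1 < t)).image Prod.fst
        = (S2.filter (fun q => q.1 < t)).image Prod.fst := by
  intro n
  induction n using Nat.strong_induction_on with
  | _ n ih =>
    intro t hcard
    have key : ∀ q ∈ P, q.1 < t → (q ∈ S1 ↔ q ∈ S2) := by
      intro q hqP hqt
      have hsub : P.filter (fun r => r.1 < q.1) ⊂ P.filter (fun r => r.1 < t) := by
        refine (Finset.ssubset_iff_of_subset ?_).mpr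
          ⟨q, Finset.mem_filter.mpr ⟨hqP, hqt⟩, by simp⟩
        intro r hr
        rcases Finset.mem_filter.mp hr with ⟨hrP, hrlt⟩
        exact Finset.mem_filter.mpr ⟨hrP, lt_trans hrlt hqt⟩
      have hfe := ih _ (lt_of_lt_of_le (Finset.card_lt_card hsub) hcard) q.1 le_rfl
      have heq : intensity μ Φ S1 q.1 = intensity μ Φ S2 q.1 :=
        intensity_congr μ Φ q.1 S1 S2
          (fun p hp r hr => hc1 p (hS1.1 hp) r (hS1.1 hr))
          (fun p hp r hr => hc2 p (hS2.1 hp) r (hS2.1 hr)) hfe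
      rw [hS1.2 q (Finset.mem_insert_of_mem hqP), hS2.2 q (Finset.mem_insert_of_mem hqP), heq]
    ext s
    simp only [Finset.mem_image, Finset.mem_filter]
    constructor
    · rintro ⟨q, ⟨hq, hlt⟩, rfl⟩
      rcases Finset.mem_insert.mp (hS1.1 hq) with rfl | hqP
      · exact ⟨(v, 0), ⟨hv2, hlt⟩, rfl⟩
      · exact ⟨q, ⟨(key q hqP hlt).mp hq, hlt⟩, rfl⟩
    · rintro ⟨q, ⟨hq, hlt⟩, rfl⟩
      rcases Finset.mem_insert.mp (hS2.1 hq) with rfl | hqP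
      · exact ⟨(v, θ), ⟨hv1, hlt⟩, rfl⟩
      · exact ⟨q, ⟨(key q hqP hlt).mpr hq, hlt⟩, rfl⟩

theorem thinning_integral_mark_invariance
    (T : ℝ) (hT : 0 < T)
    (μ Φ : ℝ → ℝ) (hμ : ∀ t, 0 ≤ μ t) (hΦ : ∀ t, 0 ≤ Φ t)
    (P : Finset (ℝ × ℝ)) (hP : IsConfig T P)
    (S : Finset (ℝ × ℝ)) (hS : IsThinningSolution μ Φ P S)
    (v : ℝ) (hv0 : 0 < v) (hvT : v ≤ T)
    (hvfresh : ∀ p ∈ P, p.1 ≠ v)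
    (G : Finset ℝ → ℝ)
    (Sθ : ℝ → Finset (ℝ × ℝ))
    (hSθ : ∀ θ, 0 ≤ θ → IsThinningSolution μ Φ (insert (v, θ) P) (Sθ θ)) :
    ∫ θ in Set.Ici (0:ℝ),
        (if θ ≤ intensity μ Φ S v then G ((Sθ θ).image Prod.fst) else 0)
      = intensity μ Φ S v * G ((Sθ 0).image Prod.fst) := by
  have hΛ0 : 0 ≤ intensity μ Φ S v :=
    add_nonneg (hμ v) (Finset.sum_nonneg fun q _ => hΦ _)
  set Λ := intensity μ Φ S v with hΛdef
  have hcfg : ∀ θ' : ℝ, ∀ p ∈ insert (v, θ') P, ∀ q ∈ insert (v, θ') P,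
      p.1 = q.1 → p = q := by
    intro θ' p hp q hq h
    rcases Finset.mem_insert.mp hp with rfl | hp' <;>
      rcases Finset.mem_insert.mp hq with rfl | hq'
    · rfl
    · exact absurd h.symm (hvfresh q hq')
    · exact absurd h (hvfresh p hp')
    · exact hP.2 p hp' q hq' h
  have hIv : ∀ θ', 0 ≤ θ' → intensity μ Φ (Sθ θ') v = Λ := by
    intro θ' h0
    have hfe := below_eq μ Φ P S hS v θ' (Sθ θ') (hSθ θ' h0)
      ((P.filter (fun q => q.1 < v)).card) v le_rfl le_rfl
    rw [hΛdef]
    unfold intensity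
    rw [hfe]
  have hmemv : ∀ θ', 0 ≤ θ' → θ' ≤ Λ → (v, θ') ∈ Sθ θ' := by
    intro θ' h0 hle
    refine ((hSθ θ' h0).2 (v, θ') (Finset.mem_insert_self _ _)).mpr ?_
    show θ' ≤ intensity μ Φ (Sθ θ') v
    rw [hIv θ' h0]
    exact hle
  have himg : ∀ θ', 0 ≤ θ' → θ' ≤ Λ →
      (Sθ θ').image Prod.fst = (Sθ 0).image Prod.fst := by
    intro θ' h0 hle
    have hfull : ∀ θ'' : ℝ, 0 ≤ θ'' →
        (Sθ θ'').filter (fun q => q.1 < T + 1) = Sθ θ'' := by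
      intro θ'' h0'
      refine Finset.filter_true_of_mem fun q hq => ?_
      rcases Finset.mem_insert.mp ((hSθ θ'' h0').1 hq) with rfl | hq'
      · simpa using by linarith
      · have := (hP.1 q hq').2.1
        linarith
    have hmain := image_filter_eq μ Φ P v θ' (hcfg θ') (hcfg 0)
      (Sθ θ') (hSθ θ' h0) (Sθ 0) (hSθ 0 le_rfl)
      (hmemv θ' h0 hle) (hmemv 0 le_rfl hΛ0)
      ((P.filter (fun q => q.1 < T + 1)).card) (T + 1) le_rfl
    rw [← hfull θ' h0, ← hfull 0 le_rfl, hmain]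
  have hGconst : ∀ θ' ∈ Set.Ici (0:ℝ),
      (if θ' ≤ Λ then G ((Sθ θ').image Prod.fst) else 0)
        = (Set.Iic Λ).indicator (fun _ => G ((Sθ 0).image Prod.fst)) θ' := by
    intro θ' h0
    by_cases h : θ' ≤ Λ
    · rw [if_pos h, Set.indicator_of_mem (Set.mem_Iic.mpr h), himg θ' h0 h]
    · rw [if_neg h, Set.indicator_of_notMem (by simpa [Set.mem_Iic] using h)]
  rw [setIntegral_congr_fun measurableSet_Ici hGconst,
    setIntegral_indicator measurableSet_Iic, Set.Ici_inter_Iic,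
    setIntegral_const, Real.volume_real_Icc_of_le hΛ0, sub_zero,
    smul_eq_mul]
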